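/- arXiv:2211.08393 — 3 statements merged into one kernel-verified Lean document; each statement's English description precedes it below -/
import Mathlib

section
/- For i.i.d. θ^(1),...,θ^(M) ~ q and positive integrable p, the expected multi-sample objective E[-log((1/M)Σ_{m=1}^M p(θ^(m)))] is non-increasing in M: for all M ≥ 1, E[-log((1/M+1)Σ_{m=1}^{M+1} p(θ^(m)))] ≤ E[-log((1/M)Σ_{m=1}^M p(θ^(m)))]. -/
open MeasureTheory

/-- The expected multi-sample objective `E[-log ((1/M) ∑ₘ p(θ⁽ᵐ⁾))]` is non-increasing in `M`. -/
theorem multisample_objective_antitone {Θ : Type*} [MeasurableSpace Θ]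
    (q : Measure Θ) [IsProbabilityMeasure q] (M : ℕ) (hM : 1 ≤ M)
    (p : Θ → ℝ) (hmeas : Measurable p) (hpos : ∀ θ, 0 < p θ) (hint : Integrable p q)
    (hintM : Integrable
      (fun θs : Fin M → Θ => Real.log ((1 / (M : ℝ)) * ∑ m : Fin M, p (θs m)))
      (Measure.pi fun _ : Fin M => q))
    (hintM' : Integrable
      (fun θs : Fin (M + 1) → Θ =>
        Real.log ((1 / ((M : ℝ) + 1)) * ∑ m : Fin (M + 1), p (θs m)))
      (Measure.pi fun _ : Fin (M + 1) => q)) :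
    ∫ θs : Fin (M + 1) → Θ, -Real.log ((1 / ((M : ℝ) + 1)) * ∑ m : Fin (M + 1), p (θs m))
        ∂(Measure.pi fun _ : Fin (M + 1) => q)
      ≤ ∫ θs : Fin M → Θ, -Real.log ((1 / (M : ℝ)) * ∑ m : Fin M, p (θs m))
          ∂(Measure.pi fun _ : Fin M => q) := by
  set μ : Measure (Fin M → Θ) := Measure.pi fun _ => q with hμ
  set ν : Measure (Fin (M + 1) → Θ) := Measure.pi fun _ => q with hν
  have hMpos : (0:ℝ) < M := by exact_mod_cast hM
  have hM1pos : (0:ℝ) < (M:ℝ) + 1 := by positivity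
  set g : (Fin M → Θ) → ℝ := fun θs => Real.log ((1 / (M : ℝ)) * ∑ m : Fin M, p (θs m))
    with hg
  -- the leave-one-out maps
  have hT : ∀ k : Fin (M+1),
      MeasurePreserving (fun θs : Fin (M+1) → Θ => fun m : Fin M => θs (k.succAbove m)) ν μ := by
    intro k
    have h1 := measurePreserving_piFinSuccAbove (fun _ : Fin (M+1) => q) k
    have h2 : MeasurePreserving (Prod.snd : Θ × (Fin M → Θ) → (Fin M → Θ))
        (q.prod μ) μ := ⟨measurable_snd, Measure.snd_prod⟩
    exact h2.comp h1
  -- integrability of each leave-one-out term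
  have hgint : ∀ k : Fin (M+1), Integrable
      (fun θs : Fin (M+1) → Θ => g (fun m => θs (k.succAbove m))) ν := by
    intro k
    exact ((hT k).integrable_comp hintM.1).2 hintM
  -- equality of integrals for each leave-one-out term
  have hgeq : ∀ k : Fin (M+1),
      ∫ θs : Fin (M+1) → Θ, g (fun m => θs (k.succAbove m)) ∂ν = ∫ x, g x ∂μ := by
    intro k
    rw [← (hT k).map_eq, integral_map (hT k).measurable.aemeasurable]
    rw [(hT k).map_eq]; exact hintM.1
  -- pointwise Jensen inequality
  have hpt : ∀ θs : Fin (M+1) → Θ,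
      -Real.log ((1 / ((M : ℝ) + 1)) * ∑ m : Fin (M + 1), p (θs m))
      ≤ ∑ k : Fin (M+1), (1 / ((M:ℝ)+1)) * (-(g (fun m => θs (k.succAbove m)))) := by
    intro θs
    have hsum : ∀ k : Fin (M+1),
        (∑ m : Fin M, p (θs (k.succAbove m))) = (∑ j : Fin (M+1), p (θs j)) - p (θs k) := by
      intro k
      have := Fin.sum_univ_succAbove (fun j => p (θs j)) k
      linarith [this]
    have hjensen := strictConcaveOn_log_Ioi.concaveOn.le_map_sum
      (t := Finset.univ) (w := fun _ : Fin (M+1) => 1 / ((M:ℝ)+1))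
      (p := fun k : Fin (M+1) => (1 / (M : ℝ)) * ∑ m : Fin M, p (θs (k.succAbove m)))
      (fun _ _ => by positivity)
      (by simp [Finset.sum_const]; field_simp)
      (fun k _ => by
        have : (0:ℝ) < ∑ m : Fin M, p (θs (k.succAbove m)) :=
          Finset.sum_pos (fun m _ => hpos _) (by simp [Finset.univ_nonempty_iff]; exact Fin.pos_iff_nonempty.mp hM)
        simp only [Set.mem_Ioi]; positivity)
    have hkey : (∑ k : Fin (M+1), (1 / ((M:ℝ)+1)) •
        ((1 / (M : ℝ)) * ∑ m : Fin M, p (θs (k.succAbove m))))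
        = (1 / ((M : ℝ) + 1)) * ∑ m : Fin (M + 1), p (θs m) := by
      simp only [smul_eq_mul, hsum]
      simp only [mul_sub, Finset.sum_sub_distrib, ← Finset.mul_sum, Finset.sum_const,
        Finset.card_univ, Fintype.card_fin, nsmul_eq_mul]
      field_simp
      push_cast
      ring
    rw [hkey] at hjensen
    have : ∑ k : Fin (M+1), (1 / ((M:ℝ)+1)) * (-(g (fun m => θs (k.succAbove m))))
        = -∑ k : Fin (M+1), (1 / ((M:ℝ)+1)) • g (fun m => θs (k.succAbove m)) := by
      simp [Finset.sum_neg_distrib, mul_neg]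
    rw [this]
    exact neg_le_neg hjensen
  -- integrate the pointwise inequality
  have hint_rhs : Integrable
      (fun θs : Fin (M+1) → Θ => ∑ k : Fin (M+1), (1 / ((M:ℝ)+1)) * (-(g (fun m => θs (k.succAbove m))))) ν :=
    integrable_finset_sum _ (fun k _ => ((hgint k).neg.const_mul _))
  calc ∫ θs : Fin (M + 1) → Θ, -Real.log ((1 / ((M : ℝ) + 1)) * ∑ m : Fin (M + 1), p (θs m)) ∂ν
      ≤ ∫ θs : Fin (M+1) → Θ, ∑ k : Fin (M+1), (1 / ((M:ℝ)+1)) * (-(g (fun m => θs (k.succAbove m)))) ∂ν :=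
        integral_mono hintM'.neg hint_rhs hpt
    _ = ∑ k : Fin (M+1), (1 / ((M:ℝ)+1)) * ∫ θs : Fin (M+1) → Θ, -(g (fun m => θs (k.succAbove m))) ∂ν := by
        rw [integral_finset_sum (f := fun (k : Fin (M+1)) (θs : Fin (M+1) → Θ) =>
            (1 / ((M:ℝ)+1)) * -(g fun m => θs (k.succAbove m))) Finset.univ
          (fun k _ => by exact ((hgint k).neg.const_mul _))]
        exact Finset.sum_congr rfl (fun k _ => integral_const_mul _ _)
    _ = ∑ k : Fin (M+1), (1 / ((M:ℝ)+1)) * ∫ x, -(g x) ∂μ := by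
        refine Finset.sum_congr rfl (fun k _ => ?_)
        rw [integral_neg, integral_neg, hgeq k]
    _ = ∫ x, -(g x) ∂μ := by
        rw [← Finset.sum_mul, Finset.sum_const]
        simp; field_simp
end

section
/- For i.i.d. θ^(1),...,θ^(M) ~ q and positive integrable p with p log p integrable, the expected multi-sample objective satisfies the sandwich: -log E_q[p(θ)] ≤ E[-log((1/M)Σ_m p(θ^(m)))] ≤ E_q[-log p(θ)]; moreover at M = 1 the upper bound is an equality. -/
open MeasureTheory

/-- Evaluation at a coordinate is measure preserving for a product of probability measures. -/
lemma measurePreserving_eval_pi' {Θ : Type*} [MeasurableSpace Θ] (q : Measure Θ)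
    [IsProbabilityMeasure q] {M : ℕ} (m : Fin M) :
    MeasurePreserving (fun θs : Fin M → Θ => θs m) (Measure.pi fun _ : Fin M => q) q := by
  refine ⟨measurable_pi_apply m, ?_⟩
  ext s hs
  rw [Measure.map_apply (measurable_pi_apply m) hs]
  have : (fun θs : Fin M → Θ => θs m) ⁻¹' s
      = Set.pi Set.univ (Function.update (fun _ : Fin M => (Set.univ : Set Θ)) m s) := by
    rw [Set.eval_preimage]
  rw [this, Measure.pi_pi]
  rw [Finset.prod_eq_single m]
  · simp
  · intro j _ hj; simp [Function.update_of_ne hj]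
  · simp

/-- Tangent-line bound for `log`: `log x ≤ log a + x / a - 1` for positive `x`, `a`. -/
lemma log_le_tangent {x a : ℝ} (hx : 0 < x) (ha : 0 < a) :
    Real.log x ≤ Real.log a + (x / a - 1) := by
  have h := Real.log_le_sub_one_of_pos (div_pos hx ha)
  rw [Real.log_div (ne_of_gt hx) (ne_of_gt ha)] at h
  linarith

/-- Sandwich for the expected multi-sample objective: the DLM loss lower-bounds it and the
ELBO loss upper-bounds it; at `M = 1` the upper bound is an equality. -/
theorem multisample_sandwich {Θ : Type*} [MeasurableSpace Θ]
    (q : Measure Θ) [IsProbabilityMeasure q] (M : ℕ) (hM : 1 ≤ M)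
    (p : Θ → ℝ) (hmeas : Measurable p) (hpos : ∀ θ, 0 < p θ) (hint : Integrable p q)
    (hplogp : Integrable (fun θ => p θ * Real.log (p θ)) q)
    (hlog : Integrable (fun θ => Real.log (p θ)) q)
    (hintM : Integrable
      (fun θs : Fin M → Θ => Real.log ((1 / (M : ℝ)) * ∑ m : Fin M, p (θs m)))
      (Measure.pi fun _ : Fin M => q)) :
    (-Real.log (∫ θ, p θ ∂q)
        ≤ ∫ θs : Fin M → Θ, -Real.log ((1 / (M : ℝ)) * ∑ m : Fin M, p (θs m))
            ∂(Measure.pi fun _ : Fin M => q)) ∧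
    (∫ θs : Fin M → Θ, -Real.log ((1 / (M : ℝ)) * ∑ m : Fin M, p (θs m))
          ∂(Measure.pi fun _ : Fin M => q)
        ≤ ∫ θ, -Real.log (p θ) ∂q) ∧
    (M = 1 →
      ∫ θs : Fin M → Θ, -Real.log ((1 / (M : ℝ)) * ∑ m : Fin M, p (θs m))
          ∂(Measure.pi fun _ : Fin M => q)
        = ∫ θ, -Real.log (p θ) ∂q) := by
  have hMpos : (0 : ℝ) < (M : ℝ) := by exact_mod_cast Nat.lt_of_lt_of_le Nat.zero_lt_one hM
  set ν : Measure (Fin M → Θ) := Measure.pi fun _ : Fin M => q with hν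
  haveI : IsProbabilityMeasure ν := by rw [hν]; infer_instance
  set f : (Fin M → Θ) → ℝ := fun θs => (1 / (M : ℝ)) * ∑ m : Fin M, p (θs m) with hf
  -- positivity of f
  have hfpos : ∀ θs, 0 < f θs := by
    intro θs
    apply mul_pos (by positivity)
    haveI : Nonempty (Fin M) := Fin.pos_iff_nonempty.mp (Nat.lt_of_lt_of_le Nat.zero_lt_one hM)
    exact Finset.sum_pos (fun m _ => hpos (θs m)) Finset.univ_nonempty
  -- integrability of coordinate compositions
  have hmp : ∀ m : Fin M, MeasurePreserving (fun θs : Fin M → Θ => θs m) ν q :=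
    fun m => measurePreserving_eval_pi' q m
  have hintp : ∀ m : Fin M, Integrable (fun θs : Fin M → Θ => p (θs m)) ν :=
    fun m => ((hmp m).integrable_comp hmeas.aestronglyMeasurable).mpr hint
  have hintlog : ∀ m : Fin M, Integrable (fun θs : Fin M → Θ => Real.log (p (θs m))) ν :=
    fun m => ((hmp m).integrable_comp
      (hmeas.log.aestronglyMeasurable)).mpr hlog
  have hintegralp : ∀ m : Fin M, ∫ θs, p (θs m) ∂ν = ∫ θ, p θ ∂q := by
    intro m
    rw [← (hmp m).map_eq, integral_map (measurable_pi_apply m).aemeasurable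
      hmeas.aestronglyMeasurable]
  have hintegrallog : ∀ m : Fin M, ∫ θs, Real.log (p (θs m)) ∂ν = ∫ θ, Real.log (p θ) ∂q := by
    intro m
    rw [← (hmp m).map_eq, integral_map (measurable_pi_apply m).aemeasurable
      hmeas.log.aestronglyMeasurable]
  have hfint : Integrable f ν := by
    rw [hf]
    exact (integrable_finset_sum Finset.univ (fun m _ => hintp m)).const_mul _
  have hfintegral : ∫ θs, f θs ∂ν = ∫ θ, p θ ∂q := by
    rw [hf]
    simp only [integral_const_mul]
    rw [integral_finset_sum Finset.univ (fun m _ => hintp m)]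
    simp only [hintegralp]
    rw [Finset.sum_const, Finset.card_univ, Fintype.card_fin, nsmul_eq_mul]
    field_simp
  set a : ℝ := ∫ θ, p θ ∂q with haa
  have ha_pos : 0 < a := by
    rw [haa]
    rw [integral_pos_iff_support_of_nonneg (fun θ => (hpos θ).le) hint]
    have : Function.support p = Set.univ := by
      ext θ; simp [Function.support, ne_of_gt (hpos θ)]
    rw [this]
    simp
  refine ⟨?_, ?_, ?_⟩
  · -- lower bound
    rw [integral_neg, neg_le_neg_iff]
    have hpt : ∀ θs, Real.log (f θs) ≤ Real.log a + (f θs / a - 1) :=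
      fun θs => log_le_tangent (hfpos θs) ha_pos
    have hRHSint : Integrable (fun θs => Real.log a + (f θs / a - 1)) ν := by
      apply Integrable.add (integrable_const _)
      exact (hfint.div_const a).sub (integrable_const _)
    calc ∫ θs, Real.log (f θs) ∂ν ≤ ∫ θs, (Real.log a + (f θs / a - 1)) ∂ν :=
          integral_mono hintM hRHSint hpt
      _ = Real.log a := by
          have hdiv : Integrable (fun θs => f θs / a) ν := hfint.div_const a
          have hsub : Integrable (fun θs => f θs / a - 1) ν := hdiv.sub (integrable_const _)
          rw [integral_add (integrable_const _) hsub, integral_const,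
            integral_sub hdiv (integrable_const _), integral_const, integral_div, hfintegral]
          simp [div_self (ne_of_gt ha_pos)]
  · -- upper bound
    rw [integral_neg]
    have : ∫ θ, -Real.log (p θ) ∂q = -∫ θ, Real.log (p θ) ∂q := integral_neg _
    rw [this, neg_le_neg_iff]
    -- pointwise: (1/M) Σ log p(θs m) ≤ log f θs
    have hpt : ∀ θs, (1 / (M : ℝ)) * ∑ m : Fin M, Real.log (p (θs m)) ≤ Real.log (f θs) := by
      intro θs
      have hS := hfpos θs
      have hsum : ∑ m : Fin M, p (θs m) = (M : ℝ) * f θs := by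
        rw [hf]; field_simp
      have hterm : ∀ m : Fin M, Real.log (p (θs m))
          ≤ Real.log (f θs) + (p (θs m) / f θs - 1) :=
        fun m => log_le_tangent (hpos _) hS
      have hsumle : ∑ m : Fin M, Real.log (p (θs m))
          ≤ ∑ m : Fin M, (Real.log (f θs) + (p (θs m) / f θs - 1)) :=
        Finset.sum_le_sum fun m _ => hterm m
      have : ∑ m : Fin M, (Real.log (f θs) + (p (θs m) / f θs - 1))
          = (M : ℝ) * Real.log (f θs) := by
        rw [Finset.sum_add_distrib, Finset.sum_const, Finset.card_univ, Fintype.card_fin,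
          nsmul_eq_mul, Finset.sum_sub_distrib, ← Finset.sum_div, hsum, Finset.sum_const,
          Finset.card_univ, Fintype.card_fin, nsmul_eq_mul]
        field_simp
        ring
      have h2 : ∑ m : Fin M, Real.log (p (θs m)) ≤ (M : ℝ) * Real.log (f θs) :=
        le_trans hsumle this.le
      have hmul := mul_le_mul_of_nonneg_left h2 (by positivity : (0:ℝ) ≤ 1 / (M : ℝ))
      have heq : (1 / (M : ℝ)) * ((M : ℝ) * Real.log (f θs)) = Real.log (f θs) := by
        field_simp
      linarith
    have hLHSint : Integrable (fun θs => (1 / (M : ℝ)) * ∑ m : Fin M, Real.log (p (θs m))) ν :=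
      (integrable_finset_sum Finset.univ (fun m _ => hintlog m)).const_mul _
    have key : ∫ θ, Real.log (p θ) ∂q
        = ∫ θs, (1 / (M : ℝ)) * ∑ m : Fin M, Real.log (p (θs m)) ∂ν := by
      rw [integral_const_mul, integral_finset_sum Finset.univ (fun m _ => hintlog m)]
      simp only [hintegrallog]
      rw [Finset.sum_const, Finset.card_univ, Fintype.card_fin, nsmul_eq_mul]
      field_simp
    rw [key]
    exact integral_mono hLHSint hintM hpt
  · -- equality at M = 1
    intro hM1
    subst hM1
    have : ∀ θs : Fin 1 → Θ, -Real.log ((1 / (1 : ℕ) : ℝ) * ∑ m : Fin 1, p (θs m))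
        = -Real.log (p (θs 0)) := by
      intro θs
      simp [Fin.sum_univ_one]
    calc ∫ θs : Fin 1 → Θ, -Real.log ((1 / ((1:ℕ) : ℝ)) * ∑ m : Fin 1, p (θs m)) ∂ν
        = ∫ θs : Fin 1 → Θ, -Real.log (p (θs 0)) ∂ν := by
          apply integral_congr_ae; filter_upwards with θs; exact this θs
      _ = ∫ θ, -Real.log (p θ) ∂q := by
          rw [← (hmp 0).map_eq, integral_map (measurable_pi_apply 0).aemeasurable
            (hmeas.log.aestronglyMeasurable.neg)]
end

section
/- Let X₁,...,X_M be i.i.d. random variables with values in [c, 1] for some c ∈ (0,1), with mean μ = E[X₁]. Then 0 ≤ E[-log((1/M)Σ_m X_m)] - (-log μ) ≤ Var(X₁)/(2c²M), so the bias of the M-sample DLM estimator vanishes at rate O(1/M). -/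
open MeasureTheory

lemma aux_logB {x : ℝ} (hx : 1 ≤ x) : x - 1 - Real.log x ≤ (x - 1) ^ 2 / 2 := by
  set f : ℝ → ℝ := fun t => (t - 1) ^ 2 / 2 - (t - 1) + Real.log t with hf
  have hder : ∀ t : ℝ, 0 < t → HasDerivAt f ((t - 1) ^ 2 / t) t := by
    intro t ht
    have h := ((((hasDerivAt_id t).sub_const 1).pow 2).div_const 2).sub
      ((hasDerivAt_id t).sub_const 1) |>.add (Real.hasDerivAt_log ht.ne')
    refine h.congr_deriv ?_
    simp only [id_eq]
    field_simp
    ring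
  have hmono : MonotoneOn f (Set.Ici 1) := by
    apply monotoneOn_of_deriv_nonneg (convex_Ici 1)
    · apply ContinuousOn.add
      · fun_prop
      · apply Real.continuousOn_log.mono
        intro t ht
        simp only [Set.mem_compl_iff, Set.mem_singleton_iff]
        intro h; rw [h] at ht; exact absurd ht.out (by norm_num)
    · intro t ht
      rw [interior_Ici] at ht
      exact ((hder t (lt_trans one_pos ht)).differentiableAt).differentiableWithinAt
    · intro t ht
      rw [interior_Ici] at ht
      have ht0 : (0:ℝ) < t := lt_trans one_pos ht
      rw [(hder t ht0).deriv]
      positivity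
  have h1 : f 1 = 0 := by simp [hf]
  have := hmono (Set.mem_Ici.mpr le_rfl) (Set.mem_Ici.mpr hx) hx
  rw [h1] at this
  simp only [hf] at this
  linarith

lemma aux_logA {x : ℝ} (hx0 : 0 < x) (hx1 : x ≤ 1) :
    x - 1 - Real.log x ≤ (x - 1) ^ 2 / (2 * x) := by
  set f : ℝ → ℝ := fun t => (t - 1) ^ 2 / (2 * t) - (t - 1) + Real.log t with hf
  have hder : ∀ t : ℝ, 0 < t → HasDerivAt f (-((t - 1) ^ 2 / (2 * t ^ 2))) t := by
    intro t ht
    have h := (((((hasDerivAt_id t).sub_const 1).pow 2).div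
      ((hasDerivAt_id t).const_mul 2) (by positivity)).sub
      ((hasDerivAt_id t).sub_const 1)).add (Real.hasDerivAt_log ht.ne')
    refine h.congr_deriv ?_
    simp only [id_eq, Pi.pow_apply]
    field_simp
    ring
  have hanti : AntitoneOn f (Set.Ioc 0 1) := by
    apply antitoneOn_of_deriv_nonpos (convex_Ioc 0 1)
    · apply ContinuousOn.add
      · apply ContinuousOn.sub
        · apply ContinuousOn.div (by fun_prop) (by fun_prop)
          intro t ht
          have := ht.1
          positivity
        · fun_prop
      · apply Real.continuousOn_log.mono
        intro t ht
        simp only [Set.mem_compl_iff, Set.mem_singleton_iff]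
        intro h; rw [h] at ht; exact absurd ht.1 (lt_irrefl 0)
    · intro t ht
      rw [interior_Ioc] at ht
      exact ((hder t ht.1).differentiableAt).differentiableWithinAt
    · intro t ht
      rw [interior_Ioc] at ht
      rw [(hder t ht.1).deriv]
      have h0 : 0 ≤ (t - 1) ^ 2 / (2 * t ^ 2) := by positivity
      linarith
  have h1 : f 1 = 0 := by simp [hf]
  have := hanti (Set.mem_Ioc.mpr ⟨hx0, hx1⟩) (Set.mem_Ioc.mpr ⟨one_pos, le_rfl⟩) hx1
  rw [h1] at this
  simp only [hf] at this
  linarith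


lemma key_upper {c t m : ℝ} (hc : 0 < c) (ht : c ≤ t) (hm : c ≤ m) :
    -Real.log t + Real.log m + (t - m) / m ≤ (t - m) ^ 2 / (2 * c ^ 2) := by
  have ht0 : 0 < t := lt_of_lt_of_le hc ht
  have hm0 : 0 < m := lt_of_lt_of_le hc hm
  have hx0 : 0 < t / m := div_pos ht0 hm0
  have hlog : -Real.log t + Real.log m = -Real.log (t / m) := by
    rw [Real.log_div ht0.ne' hm0.ne']; ring
  have hx1 : (t - m) / m = t / m - 1 := by field_simp
  rw [hlog, hx1]
  rcases le_total (t / m) 1 with h | h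
  · have hA := aux_logA hx0 h
    have e1 : t / m - 1 = (t - m) / m := by field_simp
    have heq : (t / m - 1) ^ 2 / (2 * (t / m)) = (t - m) ^ 2 / (2 * (m * t)) := by
      rw [e1, div_pow, div_div]
      congr 1
      field_simp
    have hle : (t - m) ^ 2 / (2 * (m * t)) ≤ (t - m) ^ 2 / (2 * c ^ 2) := by
      apply div_le_div_of_nonneg_left (by positivity) (by positivity)
      have : c * c ≤ m * t := mul_le_mul hm ht hc.le hm0.le
      nlinarith
    have hA2 := heq ▸ hA
    linarith
  · have hB := aux_logB h
    have e1 : t / m - 1 = (t - m) / m := by field_simp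
    have heq : (t / m - 1) ^ 2 / 2 = (t - m) ^ 2 / (2 * m ^ 2) := by
      rw [e1, div_pow, div_div, mul_comm (m ^ 2) 2]
    have hle : (t - m) ^ 2 / (2 * m ^ 2) ≤ (t - m) ^ 2 / (2 * c ^ 2) := by
      apply div_le_div_of_nonneg_left (by positivity) (by positivity)
      nlinarith
    have hB2 := heq ▸ hB
    linarith

lemma key_lower {t m : ℝ} (ht0 : 0 < t) (hm0 : 0 < m) :
    -(t - m) / m ≤ -Real.log t + Real.log m := by
  have h := Real.log_le_sub_one_of_pos (div_pos ht0 hm0)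
  rw [Real.log_div ht0.ne' hm0.ne'] at h
  have : t / m - 1 = (t - m) / m := by field_simp
  rw [this] at h
  rw [neg_div]
  linarith

lemma prod_two_aux {α : Type*} [CommMonoid α] {M : ℕ} {f : Fin M → α} {m n : Fin M}
    (hmn : m ≠ n) (h : ∀ i, i ≠ m → i ≠ n → f i = 1) : ∏ i, f i = f m * f n := by
  classical
  rw [← Finset.mul_prod_erase Finset.univ f (Finset.mem_univ m),
      ← Finset.mul_prod_erase _ f (Finset.mem_erase.mpr ⟨hmn.symm, Finset.mem_univ n⟩),
      Finset.prod_eq_one, mul_one]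
  intro i hi
  simp only [Finset.mem_erase, Finset.mem_univ, and_true] at hi
  exact h i hi.2 hi.1

lemma coord_integral {Θ : Type*} [MeasurableSpace Θ] (q : Measure Θ) [IsProbabilityMeasure q]
    {M : ℕ} (m : Fin M) (g : Θ → ℝ) :
    ∫ θs : Fin M → Θ, g (θs m) ∂(Measure.pi fun _ => q) = ∫ θ, g θ ∂q := by
  classical
  letI : MeasureSpace Θ := ⟨q⟩
  haveI : IsProbabilityMeasure (volume : Measure Θ) := ‹IsProbabilityMeasure q›
  have hvol : (Measure.pi fun _ : Fin M => q) = (volume : Measure (Fin M → Θ)) := rfl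
  set F : Fin M → Θ → ℝ := fun i θ => if i = m then g θ else 1 with hF
  have hfun : (fun θs : Fin M → Θ => g (θs m)) = fun θs => ∏ i, F i (θs i) := by
    funext θs
    rw [Finset.prod_eq_single m (fun i _ hi => by simp [hF, hi]) (by simp)]
    simp [hF]
  have key : (∫ θs : Fin M → Θ, ∏ i, F i (θs i)) = ∏ i, ∫ θ, F i θ :=
    MeasureTheory.integral_fintype_prod_eq_prod (μ := fun _ => volume) F
  rw [hvol, hfun, key]
  rw [Finset.prod_eq_single m (fun i _ hi => by simp [hF, hi]) (by simp)]
  simp [hF]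
  rfl

lemma coord_integral_two {Θ : Type*} [MeasurableSpace Θ] (q : Measure Θ)
    [IsProbabilityMeasure q] {M : ℕ} {m n : Fin M} (hmn : m ≠ n) (g h : Θ → ℝ) :
    ∫ θs : Fin M → Θ, g (θs m) * h (θs n) ∂(Measure.pi fun _ => q)
      = (∫ θ, g θ ∂q) * (∫ θ, h θ ∂q) := by
  classical
  letI : MeasureSpace Θ := ⟨q⟩
  haveI : IsProbabilityMeasure (volume : Measure Θ) := ‹IsProbabilityMeasure q›
  have hvol : (Measure.pi fun _ : Fin M => q) = (volume : Measure (Fin M → Θ)) := rfl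
  set F : Fin M → Θ → ℝ := fun i θ => if i = m then g θ else if i = n then h θ else 1 with hF
  have hfun : (fun θs : Fin M → Θ => g (θs m) * h (θs n))
      = fun θs => ∏ i, F i (θs i) := by
    funext θs
    rw [prod_two_aux hmn (fun i him hin => by simp [hF, him, hin])]
    simp [hF, hmn.symm]
  have key : (∫ θs : Fin M → Θ, ∏ i, F i (θs i)) = ∏ i, ∫ θ, F i θ :=
    MeasureTheory.integral_fintype_prod_eq_prod (μ := fun _ => volume) F
  rw [hvol, hfun, key]
  rw [prod_two_aux hmn (fun i him hin => by simp [hF, him, hin])]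
  simp [hF, hmn.symm]
  rfl

/-- Quantitative bias of the `M`-sample DLM estimator for i.i.d. values in `[c,1]`:
`0 ≤ E[-log ((1/M) ∑ₘ Xₘ)] + log μ ≤ Var(X₁) / (2 c² M)`. -/
theorem mc_dlm_bias_rate {Θ : Type*} [MeasurableSpace Θ]
    (q : Measure Θ) [IsProbabilityMeasure q] (c : ℝ) (hc : c ∈ Set.Ioo (0 : ℝ) 1)
    (X : Θ → ℝ) (hX : Measurable X) (hrange : ∀ θ, X θ ∈ Set.Icc c 1)
    (M : ℕ) (hM : 0 < M) :
    0 ≤ (∫ θs : Fin M → Θ, -Real.log ((1 / (M : ℝ)) * ∑ m : Fin M, X (θs m))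
          ∂(Measure.pi fun _ : Fin M => q))
        - (-Real.log (∫ θ, X θ ∂q)) ∧
    (∫ θs : Fin M → Θ, -Real.log ((1 / (M : ℝ)) * ∑ m : Fin M, X (θs m))
          ∂(Measure.pi fun _ : Fin M => q))
        - (-Real.log (∫ θ, X θ ∂q))
      ≤ (∫ θ, (X θ - ∫ θ', X θ' ∂q) ^ 2 ∂q) / (2 * c ^ 2 * M) := by
  classical
  obtain ⟨hc0, hc1⟩ := hc
  have hM0 : (0:ℝ) < M := Nat.cast_pos.mpr hM
  set P := (Measure.pi fun _ : Fin M => q) with hP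
  haveI : IsProbabilityMeasure P := by rw [hP]; infer_instance
  set μR := ∫ θ, X θ ∂q with hμR
  have hXint : Integrable X q :=
    ⟨hX.aestronglyMeasurable, HasFiniteIntegral.of_bounded (C := 1)
      (ae_of_all _ fun θ => by
        have h := hrange θ
        rw [Real.norm_eq_abs, abs_le]
        exact ⟨by linarith [h.1], h.2⟩)⟩
  have hμc : c ≤ μR := by
    have h : ∫ _θ, c ∂q ≤ ∫ θ, X θ ∂q :=
      integral_mono (integrable_const c) hXint fun θ => (hrange θ).1
    simpa using h
  have hμ1 : μR ≤ 1 := by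
    have h : ∫ θ, X θ ∂q ≤ ∫ _θ, (1:ℝ) ∂q :=
      integral_mono hXint (integrable_const 1) fun θ => (hrange θ).2
    simpa using h
  have hμ0 : 0 < μR := lt_of_lt_of_le hc0 hμc
  set S : (Fin M → Θ) → ℝ := fun θs => (1/(M:ℝ)) * ∑ m : Fin M, X (θs m) with hS
  have hSmeas : Measurable S :=
    (Finset.measurable_sum Finset.univ fun m _ => hX.comp (measurable_pi_apply m)).const_mul _
  have hSc : ∀ θs, c ≤ S θs := by
    intro θs
    have h1 : (M:ℝ) * c ≤ ∑ m : Fin M, X (θs m) := by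
      have h2 : ∑ _m : Fin M, c = (M:ℝ) * c := by
        simp [Finset.sum_const, Finset.card_univ, mul_comm]
      rw [← h2]
      exact Finset.sum_le_sum fun m _ => (hrange (θs m)).1
    have h3 : (1/(M:ℝ)) * ((M:ℝ) * c) ≤ S θs :=
      mul_le_mul_of_nonneg_left h1 (by positivity)
    calc c = (1/(M:ℝ)) * ((M:ℝ) * c) := by field_simp
    _ ≤ S θs := h3
  have hS1 : ∀ θs, S θs ≤ 1 := by
    intro θs
    have h1 : ∑ m : Fin M, X (θs m) ≤ (M:ℝ) * 1 := by
      have h2 : ∑ _m : Fin M, (1:ℝ) = (M:ℝ) * 1 := by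
        simp [Finset.sum_const, Finset.card_univ]
      rw [← h2]
      exact Finset.sum_le_sum fun m _ => (hrange (θs m)).2
    have h3 : S θs ≤ (1/(M:ℝ)) * ((M:ℝ) * 1) :=
      mul_le_mul_of_nonneg_left h1 (by positivity)
    calc S θs ≤ (1/(M:ℝ)) * ((M:ℝ) * 1) := h3
    _ = 1 := by field_simp
  have hbd : ∀ (f : (Fin M → Θ) → ℝ), Measurable f → ∀ C : ℝ, (∀ x, |f x| ≤ C) →
      Integrable f P :=
    fun f hf C hC => ⟨hf.aestronglyMeasurable,
      HasFiniteIntegral.of_bounded (C := C) (ae_of_all _ hC)⟩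
  have hSint : Integrable S P :=
    hbd S hSmeas 1 fun x => abs_le.mpr ⟨by linarith [hSc x], hS1 x⟩
  have hcoordint : ∀ m : Fin M, Integrable (fun θs : Fin M → Θ => X (θs m)) P :=
    fun m => hbd _ (hX.comp (measurable_pi_apply m)) 1
      fun x => abs_le.mpr ⟨by linarith [(hrange (x m)).1], (hrange (x m)).2⟩
  have hI1 : ∫ θs, S θs ∂P = μR := by
    rw [hS]
    simp only
    rw [MeasureTheory.integral_const_mul, integral_finset_sum _ fun m _ => hcoordint m]
    have h : ∀ m ∈ Finset.univ, (∫ θs, X (θs m) ∂P) = μR := fun m _ => by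
      rw [hP]; exact coord_integral q m X
    rw [Finset.sum_congr rfl h]
    simp [Finset.sum_const, Finset.card_univ]
    field_simp
  set V := ∫ θ, (X θ - μR) ^ 2 ∂q with hVdef
  have hYabs : ∀ θ : Θ, |X θ - μR| ≤ 1 := fun θ =>
    abs_le.mpr ⟨by linarith [(hrange θ).1], by linarith [(hrange θ).2]⟩
  have hYint2 : ∀ m n : Fin M,
      Integrable (fun θs : Fin M → Θ => (X (θs m) - μR) * (X (θs n) - μR)) P := by
    intro m n
    refine hbd _ (((hX.comp (measurable_pi_apply m)).sub_const μR).mul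
      ((hX.comp (measurable_pi_apply n)).sub_const μR)) 1 fun x => ?_
    rw [abs_mul]
    have h1 := hYabs (x m); have h2 := hYabs (x n)
    nlinarith [abs_nonneg (X (x m) - μR), abs_nonneg (X (x n) - μR)]
  have h0mean : ∫ θ, (X θ - μR) ∂q = 0 := by
    rw [integral_sub hXint (integrable_const μR)]
    simp [hμR]
  have hcross : ∀ m n : Fin M, m ≠ n →
      (∫ θs, (X (θs m) - μR) * (X (θs n) - μR) ∂P) = 0 := by
    intro m n hmn
    rw [hP]
    rw [coord_integral_two q hmn (fun θ => X θ - μR) (fun θ => X θ - μR), h0mean]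
    ring
  have hdiag : ∀ m : Fin M,
      (∫ θs, (X (θs m) - μR) * (X (θs m) - μR) ∂P) = V := by
    intro m
    rw [hP, coord_integral q m (fun θ => (X θ - μR) * (X θ - μR))]
    rw [hVdef]
    congr 1
    funext θ
    ring
  have hVar : ∫ θs, (S θs - μR) ^ 2 ∂P = V / M := by
    have hexp : (fun θs => (S θs - μR) ^ 2)
        = fun θs => (1/(M:ℝ))^2 * ∑ m : Fin M, ∑ n : Fin M,
            (X (θs m) - μR) * (X (θs n) - μR) := by
      funext θs
      have h1 : S θs - μR = (1/(M:ℝ)) * ∑ m : Fin M, (X (θs m) - μR) := by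
        rw [hS]
        simp only
        rw [Finset.sum_sub_distrib]
        simp only [Finset.sum_const, Finset.card_univ, Fintype.card_fin, nsmul_eq_mul]
        field_simp
      rw [h1, mul_pow]
      congr 1
      rw [pow_two, Finset.sum_mul_sum]
    rw [hexp, MeasureTheory.integral_const_mul,
      integral_finset_sum _ fun m _ => integrable_finset_sum _ fun n _ => hYint2 m n]
    have hinner : ∀ m ∈ Finset.univ, (∫ θs, ∑ n : Fin M,
        (X (θs m) - μR) * (X (θs n) - μR) ∂P) = V := by
      intro m _
      rw [integral_finset_sum _ fun n _ => hYint2 m n]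
      have h : ∀ n ∈ Finset.univ, (∫ θs, (X (θs m) - μR) * (X (θs n) - μR) ∂P)
          = if n = m then V else 0 := by
        intro n _
        by_cases hnm : n = m
        · subst hnm; simp [hdiag n]
        · simp [hnm, hcross m n (Ne.symm hnm)]
      rw [Finset.sum_congr rfl h, Finset.sum_ite_eq' Finset.univ m fun _ => V]
      simp
    rw [Finset.sum_congr rfl hinner]
    simp only [Finset.sum_const, Finset.card_univ, Fintype.card_fin, nsmul_eq_mul]
    field_simp
  -- integrability of the comparison functions
  have hlogSint : Integrable (fun θs => -Real.log (S θs)) P := by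
    refine hbd _ (Real.measurable_log.comp hSmeas).neg (-Real.log c) fun x => ?_
    have h1 : Real.log c ≤ Real.log (S x) := Real.log_le_log hc0 (hSc x)
    have h2 : Real.log (S x) ≤ 0 := Real.log_nonpos (by linarith [hSc x]) (hS1 x)
    rw [abs_le]
    constructor <;> linarith
  have hlogint : Integrable (fun θs => -Real.log (S θs) + Real.log μR) P :=
    hlogSint.add (integrable_const _)
  have hSsub : Integrable (fun θs => S θs - μR) P := hSint.sub (integrable_const μR)
  have hSq : Integrable (fun θs => (S θs - μR) ^ 2) P := by
    refine hbd _ ((hSmeas.sub_const μR).pow_const 2) 1 fun x => ?_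
    have h1 := hSc x; have h2 := hS1 x
    rw [abs_le]
    constructor <;> nlinarith
  have hlow : ∀ θs, -(S θs - μR)/μR ≤ -Real.log (S θs) + Real.log μR :=
    fun θs => key_lower (lt_of_lt_of_le hc0 (hSc θs)) hμ0
  have hup : ∀ θs, -Real.log (S θs) + Real.log μR
      ≤ (S θs - μR)^2/(2*c^2) - (S θs - μR)/μR := by
    intro θs
    have h := key_upper hc0 (hSc θs) hμc
    linarith
  have hlowint : Integrable (fun θs => -(S θs - μR)/μR) P := by
    simp only [neg_div]
    exact (hSsub.div_const μR).neg
  have hupint : Integrable (fun θs => (S θs - μR)^2/(2*c^2) - (S θs - μR)/μR) P :=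
    (hSq.div_const _).sub (hSsub.div_const _)
  have hlowI : ∫ θs, -(S θs - μR)/μR ∂P = 0 := by
    simp only [neg_div]
    rw [integral_neg, MeasureTheory.integral_div, integral_sub hSint (integrable_const μR), hI1]
    simp
  have hupI : ∫ θs, ((S θs - μR)^2/(2*c^2) - (S θs - μR)/μR) ∂P = V/(2*c^2*M) := by
    rw [integral_sub (hSq.div_const _) (hSsub.div_const _), MeasureTheory.integral_div,
      MeasureTheory.integral_div, integral_sub hSint (integrable_const μR), hI1, hVar]
    simp
    rw [div_div]
    congr 1
    ring
  have hmain : (∫ θs, -Real.log (S θs) ∂P) - (-Real.log μR)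
      = ∫ θs, (-Real.log (S θs) + Real.log μR) ∂P := by
    rw [integral_add hlogSint (integrable_const _), integral_const]
    simp
  have hlo := integral_mono hlowint hlogint hlow
  rw [hlowI] at hlo
  have hhi := integral_mono hlogint hupint hup
  rw [hupI] at hhi
  constructor
  · linarith [hmain]
  · linarith [hmain]
end
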